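/- Let g : ℝ^d → ℝ be differentiable with β-Lipschitz gradient, let r : ℝ^d → ℝ be ρ-weakly convex and continuous, and fix μ ∈ (0, ρ⁻¹). Define the proximal gradient map S(x) = prox_{μr}(x − μ∇g(x)), where prox_{μr}(z) is the unique minimizer of y ↦ r(y) + (1/(2μ))‖y − z‖². Then the map x ↦ x − S(x) is Lipschitz continuous with constant μβ + (1 + μβ)·max{1, μρ/(1 − μρ)}. -/

import Mathlib

open Set Filter Topology


variable {E : Type*} [NormedAddCommGroup E] [InnerProductSpace ℝ E]

lemma aux_norm_sq_add_smul (x u : E) (t : ℝ) :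
    ‖x + t • u‖ ^ 2 = ‖x‖ ^ 2 + 2 * t * (inner ℝ x u : ℝ) + t ^ 2 * ‖u‖ ^ 2 := by
  rw [norm_add_sq_real, real_inner_smul_right, norm_smul]
  simp [mul_pow, sq_abs]
  ring

-- strong monotonicity of the prox operator of a weakly convex function
set_option maxHeartbeats 1000000 in
lemma aux_keyA (r : E → ℝ) (ρ μ : ℝ) (hμ : 0 < μ) (hμρ : μ * ρ < 1)
    (hwc : ConvexOn ℝ Set.univ (fun z => r z + ρ / 2 * ‖z‖ ^ 2))
    (prox : E → E)
    (hprox : ∀ z y, r (prox z) + 1 / (2 * μ) * ‖prox z - z‖ ^ 2 ≤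
      r y + 1 / (2 * μ) * ‖y - z‖ ^ 2) (z₁ z₂ : E) :
    (1 - μ * ρ) * ‖prox z₂ - prox z₁‖ ^ 2 ≤ (inner ℝ (z₂ - z₁) (prox z₂ - prox z₁) : ℝ) := by
  set p₁ := prox z₁ with hp₁
  set p₂ := prox z₂ with hp₂
  set u := p₂ - p₁ with hu
  have key : ∀ t : ℝ, t ∈ Set.Ioo (0:ℝ) 1 →
      (1 - t) * ((1 - μ * ρ) * ‖u‖ ^ 2) ≤ (inner ℝ (z₂ - z₁) u : ℝ) := by
    intro t ht
    have ht0 := ht.1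
    have ht1 := ht.2
    have h1 := hprox z₁ (p₁ + t • u)
    have h2 := hprox z₂ (p₂ - t • u)
    rw [← hp₁] at h1
    rw [← hp₂] at h2
    have hc1 : r (p₁ + t • u) + ρ / 2 * ‖p₁ + t • u‖ ^ 2 ≤
        (1 - t) * (r p₁ + ρ / 2 * ‖p₁‖ ^ 2) + t * (r p₂ + ρ / 2 * ‖p₂‖ ^ 2) := by
      have h := hwc.2 (Set.mem_univ p₁) (Set.mem_univ p₂)
        (by linarith : (0:ℝ) ≤ 1 - t) (le_of_lt ht0) (by ring)
      have he : (1 - t) • p₁ + t • p₂ = p₁ + t • u := by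
        rw [hu]; module
      rwa [he] at h
    have hc2 : r (p₂ - t • u) + ρ / 2 * ‖p₂ - t • u‖ ^ 2 ≤
        t * (r p₁ + ρ / 2 * ‖p₁‖ ^ 2) + (1 - t) * (r p₂ + ρ / 2 * ‖p₂‖ ^ 2) := by
      have h := hwc.2 (Set.mem_univ p₁) (Set.mem_univ p₂)
        (le_of_lt ht0) (by linarith : (0:ℝ) ≤ 1 - t) (by ring)
      have he : t • p₁ + (1 - t) • p₂ = p₂ - t • u := by
        rw [hu]; module
      rwa [he] at h
    -- expand norms
    have e1 : ‖p₁ + t • u - z₁‖ ^ 2 = ‖p₁ - z₁‖ ^ 2 + 2 * t * (inner ℝ (p₁ - z₁) u : ℝ)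
        + t ^ 2 * ‖u‖ ^ 2 := by
      rw [show p₁ + t • u - z₁ = (p₁ - z₁) + t • u by abel, aux_norm_sq_add_smul]
    have e2 : ‖p₂ - t • u - z₂‖ ^ 2 = ‖p₂ - z₂‖ ^ 2 + 2 * (-t) * (inner ℝ (p₂ - z₂) u : ℝ)
        + (-t) ^ 2 * ‖u‖ ^ 2 := by
      rw [show p₂ - t • u - z₂ = (p₂ - z₂) + (-t) • u by rw [neg_smul]; abel,
        aux_norm_sq_add_smul]
    have e3 : ‖p₁ + t • u‖ ^ 2 = ‖p₁‖ ^ 2 + 2 * t * (inner ℝ p₁ u : ℝ)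
        + t ^ 2 * ‖u‖ ^ 2 := aux_norm_sq_add_smul p₁ u t
    have e4 : ‖p₂ - t • u‖ ^ 2 = ‖p₂‖ ^ 2 + 2 * (-t) * (inner ℝ p₂ u : ℝ)
        + (-t) ^ 2 * ‖u‖ ^ 2 := by
      rw [show p₂ - t • u = p₂ + (-t) • u by rw [neg_smul]; abel, aux_norm_sq_add_smul]
    rw [e1] at h1
    rw [e2] at h2
    rw [e3] at hc1
    rw [e4] at hc2
    -- inner product identities, scaled so linarith can use them
    have i1 : (inner ℝ (p₁ - z₁) u : ℝ) - (inner ℝ (p₂ - z₂) u : ℝ)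
        = (inner ℝ (z₂ - z₁) u : ℝ) - ‖u‖ ^ 2 := by
      rw [← inner_sub_left, show p₁ - z₁ - (p₂ - z₂) = (z₂ - z₁) - u by rw [hu]; abel,
        inner_sub_left, real_inner_self_eq_norm_sq]
    have i2 : (inner ℝ p₂ u : ℝ) - (inner ℝ p₁ u : ℝ) = ‖u‖ ^ 2 := by
      rw [← inner_sub_left, ← hu, real_inner_self_eq_norm_sq]
    have i1t := congrArg (fun x : ℝ => t * μ⁻¹ * x) i1
    have i2t := congrArg (fun x : ℝ => ρ * t * x) i2
    have hdiv : 1 / (2 * μ) = μ⁻¹ / 2 := by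
      field_simp
    rw [hdiv] at h1 h2
    -- combined inequality:
    have P : 0 ≤ t * μ⁻¹ * ((inner ℝ (z₂ - z₁) u : ℝ) - (1 - t) * ‖u‖ ^ 2)
        + ρ * t * ((1 - t) * ‖u‖ ^ 2) := by linarith only [h1, h2, hc1, hc2, i1t, i2t]
    -- divide by t/μ > 0
    have htμ : 0 < t * μ⁻¹ := by positivity
    have P2 : 0 ≤ (inner ℝ (z₂ - z₁) u : ℝ) - (1 - t) * ‖u‖ ^ 2
        + μ * ρ * ((1 - t) * ‖u‖ ^ 2) := by
      have h := mul_nonneg (le_of_lt (inv_pos.mpr htμ)) P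
      have he : (t * μ⁻¹)⁻¹ * (t * μ⁻¹ * ((inner ℝ (z₂ - z₁) u : ℝ) - (1 - t) * ‖u‖ ^ 2)
          + ρ * t * ((1 - t) * ‖u‖ ^ 2))
          = (inner ℝ (z₂ - z₁) u : ℝ) - (1 - t) * ‖u‖ ^ 2
            + μ * ρ * ((1 - t) * ‖u‖ ^ 2) := by
        field_simp
      rwa [he] at h
    nlinarith [P2, hμρ, sq_nonneg ‖u‖, ht1] -- 
  -- take the limit t → 0⁺
  have hlim : Tendsto (fun t : ℝ => (1 - t) * ((1 - μ * ρ) * ‖u‖ ^ 2)) (𝓝[>] (0:ℝ))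
      (𝓝 ((1 - μ * ρ) * ‖u‖ ^ 2)) := by
    have hco : Continuous (fun t : ℝ => (1 - t) * ((1 - μ * ρ) * ‖u‖ ^ 2)) := by
      continuity
    have := (hco.tendsto 0).mono_left (nhdsWithin_le_nhds (s := Set.Ioi (0:ℝ)))
    simpa using this
  refine le_of_tendsto hlim ?_
  filter_upwards [Ioo_mem_nhdsGT (by norm_num : (0:ℝ) < 1)] with t ht
  exact key t ht

-- Lipschitz bound for the displacement of the prox operator
lemma aux_keyB (r : E → ℝ) (ρ μ : ℝ) (hρ : 0 < ρ) (hμ : 0 < μ) (hμρ : μ * ρ < 1)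
    (hwc : ConvexOn ℝ Set.univ (fun z => r z + ρ / 2 * ‖z‖ ^ 2))
    (prox : E → E)
    (hprox : ∀ z y, r (prox z) + 1 / (2 * μ) * ‖prox z - z‖ ^ 2 ≤
      r y + 1 / (2 * μ) * ‖y - z‖ ^ 2) (z₁ z₂ : E) :
    ‖(z₂ - prox z₂) - (z₁ - prox z₁)‖ ≤ max 1 (μ * ρ / (1 - μ * ρ)) * ‖z₂ - z₁‖ := by
  have hc0 : 0 < μ * ρ := mul_pos hμ hρ
  set c := μ * ρ with hc
  set p₁ := prox z₁ with hp₁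
  set p₂ := prox z₂ with hp₂
  set s := ‖z₂ - z₁‖ with hs'
  set t := ‖p₂ - p₁‖ with ht'
  set a := (inner ℝ (z₂ - z₁) (p₂ - p₁) : ℝ) with ha'
  have hA : (1 - c) * t ^ 2 ≤ a := aux_keyA r ρ μ hμ hμρ hwc prox hprox z₁ z₂
  have hCS : a ≤ s * t := real_inner_le_norm _ _
  have hs : 0 ≤ s := norm_nonneg _
  have htn : 0 ≤ t := norm_nonneg _
  have h1c : 0 < 1 - c := by linarith
  set K := max 1 (c / (1 - c)) with hKdef
  have hK1 : (1:ℝ) ≤ K := le_max_left _ _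
  have hK0 : (0:ℝ) ≤ K := by linarith
  have hexp : ‖(z₂ - p₂) - (z₁ - p₁)‖ ^ 2 = s ^ 2 - 2 * a + t ^ 2 := by
    rw [show (z₂ - p₂) - (z₁ - p₁) = (z₂ - z₁) - (p₂ - p₁) by abel, norm_sub_sq_real]
  have hsq : ‖(z₂ - p₂) - (z₁ - p₁)‖ ^ 2 ≤ (K * s) ^ 2 := by
    rw [hexp, mul_pow]
    rcases le_or_gt c (1/2) with hcase | hcase
    · have h2 : s ^ 2 - 2 * a + t ^ 2 ≤ s ^ 2 := by nlinarith
      have h3 : s ^ 2 ≤ K ^ 2 * s ^ 2 := by nlinarith [sq_nonneg s, sq_nonneg (K - 1)]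
      linarith
    · have hKc : c / (1 - c) ≤ K := le_max_right _ _
      have hfrac : 0 ≤ c / (1 - c) := by positivity
      have htb : (1 - c) * t ≤ s := by
        rcases eq_or_lt_of_le htn with h | h
        · rw [← h]; simpa using hs
        · nlinarith
      have ht2 : ((1 - c) * t) ^ 2 ≤ s ^ 2 :=
        pow_le_pow_left₀ (mul_nonneg h1c.le htn) htb 2
      have hsq' : (1 - c) ^ 2 * (s ^ 2 - 2 * a + t ^ 2) ≤ c ^ 2 * s ^ 2 := by
        nlinarith [hA, ht2, sq_nonneg (1 - c), hcase]
      have h3 : s ^ 2 - 2 * a + t ^ 2 ≤ (c / (1 - c)) ^ 2 * s ^ 2 := by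
        rw [div_pow, div_mul_eq_mul_div, le_div_iff₀ (by positivity)]
        nlinarith [hsq']
      have h4 : (c / (1 - c)) ^ 2 * s ^ 2 ≤ K ^ 2 * s ^ 2 :=
        mul_le_mul_of_nonneg_right (pow_le_pow_left₀ hfrac hKc 2) (sq_nonneg s)
      linarith
  have hKs : 0 ≤ K * s := mul_nonneg hK0 hs
  exact le_of_pow_le_pow_left₀ two_ne_zero hKs hsq
/-- For `g` differentiable with `β`-Lipschitz gradient, `r` continuous and
`ρ`-weakly convex, and `μ ∈ (0, ρ⁻¹)`, the displacement map `x ↦ x − S(x)` of the proximal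
gradient map `S(x) = prox_{μr}(x − μ∇g(x))` is Lipschitz with constant
`μβ + (1 + μβ)·max{1, μρ/(1 − μρ)}`. -/
theorem prox_gradient_displacement_lipschitz {d : ℕ}
    (g : EuclideanSpace ℝ (Fin d) → ℝ)
    (g' : EuclideanSpace ℝ (Fin d) → EuclideanSpace ℝ (Fin d))
    (hg : ∀ x, HasGradientAt g (g' x) x)
    (β : ℝ) (hβ : 0 < β) (hg' : LipschitzWith (Real.toNNReal β) g')
    (r : EuclideanSpace ℝ (Fin d) → ℝ) (ρ : ℝ) (hρ : 0 < ρ)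
    (hwc : ConvexOn ℝ Set.univ (fun z => r z + ρ / 2 * ‖z‖ ^ 2))
    (hr : Continuous r) (μ : ℝ) (hμ : μ ∈ Set.Ioo 0 ρ⁻¹)
    (prox : EuclideanSpace ℝ (Fin d) → EuclideanSpace ℝ (Fin d))
    (hprox : ∀ z y, r (prox z) + 1 / (2 * μ) * ‖prox z - z‖ ^ 2 ≤
      r y + 1 / (2 * μ) * ‖y - z‖ ^ 2) :
    LipschitzWith (Real.toNNReal (μ * β + (1 + μ * β) * max 1 (μ * ρ / (1 - μ * ρ))))
      (fun x => x - prox (x - μ • g' x)) := by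
  obtain ⟨hμ0, hμρ'⟩ := hμ
  have hμρ : μ * ρ < 1 := by
    have := mul_lt_mul_of_pos_right hμρ' hρ
    rwa [inv_mul_cancel₀ (ne_of_gt hρ)] at this
  set K := max 1 (μ * ρ / (1 - μ * ρ)) with hK
  have hK1 : (1:ℝ) ≤ K := le_max_left _ _
  have hK0 : (0:ℝ) ≤ K := by linarith
  have hμβ : 0 < μ * β := mul_pos hμ0 hβ
  have hL0 : 0 ≤ μ * β + (1 + μ * β) * K := by nlinarith
  apply LipschitzWith.of_dist_le_mul
  intro x y
  rw [Real.coe_toNNReal _ hL0, dist_eq_norm, dist_eq_norm]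
  set Tx := x - μ • g' x with hTx
  set Ty := y - μ • g' y with hTy
  have hgl : ‖g' x - g' y‖ ≤ β * ‖x - y‖ := by
    have := hg'.dist_le_mul x y
    rwa [dist_eq_norm, dist_eq_norm, Real.coe_toNNReal _ hβ.le] at this
  have hT : ‖Tx - Ty‖ ≤ (1 + μ * β) * ‖x - y‖ := by
    have h1 : Tx - Ty = (x - y) - μ • (g' x - g' y) := by
      rw [hTx, hTy, smul_sub]; abel
    rw [h1]
    calc ‖(x - y) - μ • (g' x - g' y)‖ ≤ ‖x - y‖ + ‖μ • (g' x - g' y)‖ :=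
          norm_sub_le _ _
      _ = ‖x - y‖ + μ * ‖g' x - g' y‖ := by
          rw [norm_smul, Real.norm_eq_abs, abs_of_pos hμ0]
      _ ≤ ‖x - y‖ + μ * (β * ‖x - y‖) := by
          have := mul_le_mul_of_nonneg_left hgl hμ0.le
          linarith
      _ = (1 + μ * β) * ‖x - y‖ := by ring
  have hD : ‖(Tx - prox Tx) - (Ty - prox Ty)‖ ≤ K * ‖Tx - Ty‖ :=
    aux_keyB r ρ μ hρ hμ0 hμρ hwc prox hprox Ty Tx
  have hsplit : (x - prox Tx) - (y - prox Ty)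
      = (μ • g' x - μ • g' y) + ((Tx - prox Tx) - (Ty - prox Ty)) := by
    rw [hTx, hTy]; abel
  calc ‖(x - prox Tx) - (y - prox Ty)‖
      ≤ ‖μ • g' x - μ • g' y‖ + ‖(Tx - prox Tx) - (Ty - prox Ty)‖ := by
        rw [hsplit]; exact norm_add_le _ _
    _ ≤ μ * (β * ‖x - y‖) + K * ((1 + μ * β) * ‖x - y‖) := by
        have h1 : ‖μ • g' x - μ • g' y‖ = μ * ‖g' x - g' y‖ := by
          rw [← smul_sub, norm_smul, Real.norm_eq_abs, abs_of_pos hμ0]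
        have h2 := mul_le_mul_of_nonneg_left hgl hμ0.le
        have h3 := mul_le_mul_of_nonneg_left hT hK0
        linarith [le_trans hD h3]
    _ = (μ * β + (1 + μ * β) * K) * ‖x - y‖ := by ring
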